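/- arXiv:1810.11084 — 7 statements merged into one kernel-verified Lean document; each statement's English description precedes it below -/
import Mathlib

section
/- Let n ≥ 2 and 0 ≤ p, q ≤ n. The number of pairs (I, J) of subsets of {1,…,n} with |I| = p, |J| = q such that for every m ∈ (ℤ/2ℤ)ⁿ with m₁ + ⋯ + mₙ = 0 one has Σ_{i∈I} m_i = Σ_{j∈J} m_j in ℤ/2ℤ, equals: 2·C(n,p) if p = q and p + q = n; C(n,p) if p = q and p + q ≠ n, or if p + q = n and p ≠ q; and 0 otherwise. (Here C(n,p) denotes the binomial coefficient.) -/
open Finset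

private lemma sum_sd_stmt2 (n : ℕ) (I J : Finset (Fin n)) (m : Fin n → ZMod 2) :
    ∑ i ∈ symmDiff I J, m i = ∑ i ∈ I, m i + ∑ i ∈ J, m i := by
  have h1 : ∑ i ∈ I ∪ J, m i + ∑ i ∈ I ∩ J, m i = ∑ i ∈ I, m i + ∑ i ∈ J, m i :=
    Finset.sum_union_inter
  have h2 : symmDiff I J ∪ (I ∩ J) = I ∪ J := symmDiff_sup_inf I J
  have h3 : Disjoint (symmDiff I J) (I ∩ J) := disjoint_symmDiff_inf I J
  rw [← h2, Finset.sum_union h3, add_assoc] at h1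
  simpa [CharTwo.add_self_eq_zero] using h1

private lemma key_stmt2 (n : ℕ) (I J : Finset (Fin n)) :
    (∀ m : Fin n → ZMod 2, ∑ i, m i = 0 → ∑ i ∈ I, m i = ∑ j ∈ J, m j) ↔
      (J = I ∨ J = Iᶜ) := by
  constructor
  · intro h
    by_contra hc
    push_neg at hc
    obtain ⟨h1, h2⟩ := hc
    set S := symmDiff I J with hS
    have hSne : S ≠ ⊥ := fun hb => h1 (symmDiff_eq_bot.mp hb).symm
    have hSnu : S ≠ ⊤ := by
      intro ht
      apply h2
      have : J = symmDiff I (symmDiff I J) := (symmDiff_symmDiff_cancel_left I J).symm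
      rw [this, ← hS, ht, symmDiff_top, hnot_eq_compl]
    obtain ⟨a, ha⟩ := Finset.nonempty_iff_ne_empty.mpr hSne
    obtain ⟨b, hb⟩ := Finset.nonempty_iff_ne_empty.mpr (fun hc : Sᶜ = ∅ => hSnu (by
      simpa [Finset.compl_eq_empty_iff] using hc))
    rw [Finset.mem_compl] at hb
    have hab : a ≠ b := fun e => hb (e ▸ ha)
    set m : Fin n → ZMod 2 := fun i => (if i = a then 1 else 0) + (if i = b then 1 else 0) with hm
    have hsum : ∑ i, m i = 0 := by
      rw [hm]
      rw [Finset.sum_add_distrib, Finset.sum_ite_eq' Finset.univ a, Finset.sum_ite_eq' Finset.univ b]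
      simp only [Finset.mem_univ, if_true]
      decide
    have hSsum : ∑ i ∈ S, m i = 1 := by
      rw [hm, Finset.sum_add_distrib, Finset.sum_ite_eq' S a, Finset.sum_ite_eq' S b]
      simp [ha, hb]
    have := h m hsum
    have h0 : ∑ i ∈ S, m i = 0 := by
      rw [hS, sum_sd_stmt2, this, CharTwo.add_self_eq_zero]
    rw [hSsum] at h0
    exact one_ne_zero h0
  · rintro (rfl | rfl)
    · intro m _; rfl
    · intro m hm
      have := Finset.sum_compl_add_sum I m
      rw [hm] at this
      have h2 := eq_neg_of_add_eq_zero_left this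
      rw [CharTwo.neg_eq] at h2
      exact h2.symm

/-- For `n ≥ 2` and `0 ≤ p, q ≤ n`, the number of pairs `(I, J)` of subsets of
`{1,…,n}` with `|I| = p`, `|J| = q` such that every `m ∈ (ℤ/2ℤ)ⁿ` with `∑ mᵢ = 0` satisfies
`∑_{i∈I} mᵢ = ∑_{j∈J} mⱼ` equals `2·C(n,p)` if `p = q` and `p + q = n`; `C(n,p)` if exactly one
of `p = q`, `p + q = n` holds; and `0` otherwise. -/
theorem stmt_2 (n p q : ℕ) (hn : 2 ≤ n) (hp : p ≤ n) (hq : q ≤ n) :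
    {IJ : Finset (Fin n) × Finset (Fin n) |
        IJ.1.card = p ∧ IJ.2.card = q ∧
        ∀ m : Fin n → ZMod 2, ∑ i, m i = 0 →
          ∑ i ∈ IJ.1, m i = ∑ j ∈ IJ.2, m j}.ncard =
      if p = q ∧ p + q = n then 2 * n.choose p
      else if p = q ∨ p + q = n then n.choose p
      else 0 := by
  have hcompl : ∀ I : Finset (Fin n), Iᶜ.card = n - I.card := by
    intro I
    rw [Finset.card_compl, Fintype.card_fin]
  have hIne : ∀ I : Finset (Fin n), I ≠ Iᶜ := by
    intro I hI
    have h0 : (⟨0, by omega⟩ : Fin n) ∈ Iᶜ ↔ (⟨0, by omega⟩ : Fin n) ∉ I :=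
      Finset.mem_compl
    rw [← hI] at h0
    tauto
  set B1 : Finset (Finset (Fin n) × Finset (Fin n)) :=
    (Finset.powersetCard p (Finset.univ : Finset (Fin n))).image fun I => (I, I) with hB1
  set B2 : Finset (Finset (Fin n) × Finset (Fin n)) :=
    (Finset.powersetCard p (Finset.univ : Finset (Fin n))).image fun I => (I, Iᶜ) with hB2
  have hmB1 : ∀ IJ : Finset (Fin n) × Finset (Fin n),
      IJ ∈ B1 ↔ IJ.1.card = p ∧ IJ.2 = IJ.1 := by
    rintro ⟨I, J⟩
    simp only [hB1, Finset.mem_image, Finset.mem_powersetCard_univ, Prod.mk.injEq]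
    constructor
    · rintro ⟨K, hK, rfl, rfl⟩; exact ⟨hK, rfl⟩
    · rintro ⟨hc, rfl⟩; exact ⟨_, hc, rfl, rfl⟩
  have hmB2 : ∀ IJ : Finset (Fin n) × Finset (Fin n),
      IJ ∈ B2 ↔ IJ.1.card = p ∧ IJ.2 = IJ.1ᶜ := by
    rintro ⟨I, J⟩
    simp only [hB2, Finset.mem_image, Finset.mem_powersetCard_univ, Prod.mk.injEq]
    constructor
    · rintro ⟨K, hK, rfl, rfl⟩; exact ⟨hK, rfl⟩
    · rintro ⟨hc, rfl⟩; exact ⟨_, hc, rfl, rfl⟩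
  have hcard1 : B1.card = n.choose p := by
    rw [hB1, Finset.card_image_of_injective _ (fun a b h => (Prod.mk.injEq _ _ _ _ ▸ h).1),
      Finset.card_powersetCard, Finset.card_univ, Fintype.card_fin]
  have hcard2 : B2.card = n.choose p := by
    rw [hB2, Finset.card_image_of_injective _ (fun a b h => (Prod.mk.injEq _ _ _ _ ▸ h).1),
      Finset.card_powersetCard, Finset.card_univ, Fintype.card_fin]
  have hmem : ∀ IJ : Finset (Fin n) × Finset (Fin n),
      IJ ∈ {IJ : Finset (Fin n) × Finset (Fin n) |
        IJ.1.card = p ∧ IJ.2.card = q ∧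
        ∀ m : Fin n → ZMod 2, ∑ i, m i = 0 →
          ∑ i ∈ IJ.1, m i = ∑ j ∈ IJ.2, m j} ↔
      IJ.1.card = p ∧ IJ.2.card = q ∧ (IJ.2 = IJ.1 ∨ IJ.2 = IJ.1ᶜ) := by
    rintro ⟨I, J⟩
    simp only [Set.mem_setOf_eq, key_stmt2]
  by_cases hpq : p = q
  · by_cases hs : p + q = n
    · rw [if_pos ⟨hpq, hs⟩]
      have hset : {IJ : Finset (Fin n) × Finset (Fin n) |
        IJ.1.card = p ∧ IJ.2.card = q ∧
        ∀ m : Fin n → ZMod 2, ∑ i, m i = 0 →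
          ∑ i ∈ IJ.1, m i = ∑ j ∈ IJ.2, m j} = ↑(B1 ∪ B2) := by
        ext IJ
        rw [hmem]
        simp only [Finset.coe_union, Set.mem_union, Finset.mem_coe, hmB1, hmB2]
        constructor
        · rintro ⟨h1, h2, (h3 | h3)⟩
          · exact Or.inl ⟨h1, h3⟩
          · exact Or.inr ⟨h1, h3⟩
        · rintro (⟨h1, h3⟩ | ⟨h1, h3⟩)
          · exact ⟨h1, by rw [h3, h1, hpq], Or.inl h3⟩
          · exact ⟨h1, by rw [h3, hcompl, h1]; omega, Or.inr h3⟩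
      rw [hset, Set.ncard_coe_finset, Finset.card_union_of_disjoint, hcard1, hcard2]
      · ring
      · rw [Finset.disjoint_left]
        intro IJ hIJ1 hIJ2
        rw [hmB1 IJ] at hIJ1
        rw [hmB2 IJ] at hIJ2
        exact hIne IJ.1 (hIJ1.2 ▸ hIJ2.2)
    · rw [if_neg (by tauto), if_pos (Or.inl hpq)]
      have hset : {IJ : Finset (Fin n) × Finset (Fin n) |
        IJ.1.card = p ∧ IJ.2.card = q ∧
        ∀ m : Fin n → ZMod 2, ∑ i, m i = 0 →
          ∑ i ∈ IJ.1, m i = ∑ j ∈ IJ.2, m j} = ↑B1 := by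
        ext IJ
        rw [hmem, Finset.mem_coe, hmB1]
        constructor
        · rintro ⟨h1, h2, (h3 | h3)⟩
          · exact ⟨h1, h3⟩
          · exfalso; rw [h3, hcompl, h1] at h2; omega
        · rintro ⟨h1, h3⟩
          exact ⟨h1, by rw [h3, h1, hpq], Or.inl h3⟩
      rw [hset, Set.ncard_coe_finset, hcard1]
  · by_cases hs : p + q = n
    · rw [if_neg (by tauto), if_pos (Or.inr hs)]
      have hset : {IJ : Finset (Fin n) × Finset (Fin n) |
        IJ.1.card = p ∧ IJ.2.card = q ∧
        ∀ m : Fin n → ZMod 2, ∑ i, m i = 0 →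
          ∑ i ∈ IJ.1, m i = ∑ j ∈ IJ.2, m j} = ↑B2 := by
        ext IJ
        rw [hmem, Finset.mem_coe, hmB2]
        constructor
        · rintro ⟨h1, h2, (h3 | h3)⟩
          · exfalso; rw [h3, h1] at h2; omega
          · exact ⟨h1, h3⟩
        · rintro ⟨h1, h3⟩
          exact ⟨h1, by rw [h3, hcompl, h1]; omega, Or.inr h3⟩
      rw [hset, Set.ncard_coe_finset, hcard2]
    · rw [if_neg (by tauto), if_neg (by tauto)]
      have hset : {IJ : Finset (Fin n) × Finset (Fin n) |
        IJ.1.card = p ∧ IJ.2.card = q ∧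
        ∀ m : Fin n → ZMod 2, ∑ i, m i = 0 →
          ∑ i ∈ IJ.1, m i = ∑ j ∈ IJ.2, m j} = ∅ := by
        ext IJ
        rw [hmem]
        simp only [Set.mem_empty_iff_false, iff_false]
        rintro ⟨h1, h2, (h3 | h3)⟩
        · rw [h3, h1] at h2; omega
        · rw [h3, hcompl, h1] at h2; omega
      rw [hset, Set.ncard_empty]
end

section
/- Let d ≥ 3, n ≥ 2 and let I, J be subsets of {1,…,n}. Then the following are equivalent: (a) for every m = (m₁,…,mₙ) ∈ (ℤ/dℤ)ⁿ with m₁ + ⋯ + mₙ = 0 one has Σ_{i∈I} m_i = Σ_{j∈J} m_j in ℤ/dℤ; (b) I = J, or (I, J) = ({1,…,n}, ∅), or (I, J) = (∅, {1,…,n}). -/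
lemma zmod_cast_inj_aux (d : ℕ) (hd : 3 ≤ d) {a b : ℤ} (ha : |a| ≤ 1) (hb : |b| ≤ 1)
    (h : (a : ZMod d) = b) : a = b := by
  have h0 : ((a - b : ℤ) : ZMod d) = 0 := by push_cast; rw [h]; ring
  rw [ZMod.intCast_zmod_eq_zero_iff_dvd] at h0
  have hd' : (3:ℤ) ≤ d := by exact_mod_cast hd
  have := Int.eq_zero_of_abs_lt_dvd h0 (by
    rw [abs_sub_lt_iff]
    constructor <;> [skip; skip] <;>
      (have := abs_le.mp ha; have := abs_le.mp hb; omega))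
  omega

/-- For `d ≥ 3`, `n ≥ 2` and subsets `I, J ⊆ {1,…,n}`, the condition that every
`m ∈ (ℤ/dℤ)ⁿ` with `∑ mᵢ = 0` satisfies `∑_{i∈I} mᵢ = ∑_{j∈J} mⱼ` is equivalent to
`I = J`, or `(I, J) = ({1,…,n}, ∅)`, or `(I, J) = (∅, {1,…,n})`. -/
theorem stmt_3 (d n : ℕ) (hd : 3 ≤ d) (hn : 2 ≤ n) (I J : Finset (Fin n)) :
    (∀ m : Fin n → ZMod d, ∑ i, m i = 0 → ∑ i ∈ I, m i = ∑ j ∈ J, m j) ↔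
      (I = J ∨ (I = Finset.univ ∧ J = ∅) ∨ (I = ∅ ∧ J = Finset.univ)) := by
  constructor
  · intro h
    -- key: the function χ_I - χ_J is constant
    have key : ∀ i j : Fin n, i ≠ j →
        ((if i ∈ I then (1:ℤ) else 0) - (if i ∈ J then 1 else 0))
          = ((if j ∈ I then (1:ℤ) else 0) - (if j ∈ J then 1 else 0)) := by
      intro i j hij
      have hm := h (Pi.single i 1 + Pi.single j (-1)) (by
        simp [Finset.sum_add_distrib, Fintype.sum_pi_single'])
      simp only [Pi.add_apply, Finset.sum_add_distrib, Finset.sum_pi_single'] at hm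
      -- hm : (if i∈I then 1 else 0) + (if j∈I then -1 else 0)
      --    = (if i∈J then 1 else 0) + (if j∈J then -1 else 0) in ZMod d
      have hint : ((if i ∈ I then (1:ℤ) else 0) + (if j ∈ I then (-1:ℤ) else 0))
          = ((if i ∈ J then (1:ℤ) else 0) + (if j ∈ J then (-1:ℤ) else 0)) := by
        apply zmod_cast_inj_aux d hd
        · split_ifs <;> norm_num
        · split_ifs <;> norm_num
        · push_cast
          convert hm using 2
      split_ifs at hint ⊢ <;> omega
    set i0 : Fin n := ⟨0, by omega⟩ with hi0
    have hg : ∀ k : Fin n, ((if k ∈ I then (1:ℤ) else 0) - (if k ∈ J then 1 else 0))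
        = ((if i0 ∈ I then (1:ℤ) else 0) - (if i0 ∈ J then 1 else 0)) := by
      intro k
      by_cases hk : k = i0
      · rw [hk]
      · exact key k i0 hk
    by_cases h1 : i0 ∈ I <;> by_cases h2 : i0 ∈ J
    · left
      ext k
      have := hg k
      simp only [h1, h2, if_pos] at this
      split_ifs at this <;> simp_all
    · right; left
      constructor <;> ext k <;> have := hg k <;>
        simp only [h1, h2, if_pos, if_neg, not_false_iff] at this <;>
        split_ifs at this <;> simp_all
    · right; right
      constructor <;> ext k <;> have := hg k <;>
        simp only [h1, h2, if_pos, if_neg, not_false_iff] at this <;>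
        split_ifs at this <;> simp_all
    · left
      ext k
      have := hg k
      simp only [h1, h2, if_neg, not_false_iff] at this
      split_ifs at this <;> simp_all
  · rintro (rfl | ⟨rfl, rfl⟩ | ⟨rfl, rfl⟩) <;> intro m hm <;> simp [hm]
end

section
/- Let d ≥ 3, n ≥ 2 and 0 ≤ p, q ≤ n. The number of pairs (I, J) of subsets of {1,…,n} with |I| = p, |J| = q such that for every m ∈ (ℤ/dℤ)ⁿ with m₁ + ⋯ + mₙ = 0 one has Σ_{i∈I} m_i = Σ_{j∈J} m_j in ℤ/dℤ, equals: C(n,p) if p = q; 1 if (p,q) = (0,n) or (p,q) = (n,0); and 0 otherwise. (Here C(n,p) denotes the binomial coefficient.) -/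
open Finset

private lemma inv_iff (d n : ℕ) (hd : 3 ≤ d) (hn : 2 ≤ n) (I J : Finset (Fin n)) :
    (∀ m : Fin n → ZMod d, ∑ i, m i = 0 → ∑ i ∈ I, m i = ∑ j ∈ J, m j) ↔
      (I = J ∨ (I = ∅ ∧ J = Finset.univ) ∨ (I = Finset.univ ∧ J = ∅)) := by
  haveI : NeZero d := ⟨by omega⟩
  have h1 : (1 : ZMod d) ≠ 0 := by
    intro h
    have hdvd := (ZMod.natCast_eq_zero_iff 1 d).mp (by exact_mod_cast h)
    have := Nat.le_of_dvd one_pos hdvd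
    omega
  have h2 : (1 : ZMod d) ≠ -1 := by
    intro h
    have h2' : ((2 : ℕ) : ZMod d) = 0 := by push_cast; linear_combination h
    have hdvd := (ZMod.natCast_eq_zero_iff 2 d).mp h2'
    have := Nat.le_of_dvd two_pos hdvd
    omega
  have hneg : (-1 : ZMod d) ≠ 0 := by
    intro h; exact h1 (by linear_combination -h)
  constructor
  · intro h
    have hsum : ∀ (s : Finset (Fin n)) (i j : Fin n),
        (∑ k ∈ s, ((if k = i then (1 : ZMod d) else 0) - (if k = j then 1 else 0)))
          = (if i ∈ s then 1 else 0) - (if j ∈ s then 1 else 0) := by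
      intro s i j
      rw [Finset.sum_sub_distrib, Finset.sum_ite_eq' s i (fun _ => (1 : ZMod d)),
        Finset.sum_ite_eq' s j (fun _ => (1 : ZMod d))]
    have key : ∀ i j : Fin n,
        ((if i ∈ I then (1 : ZMod d) else 0) - (if i ∈ J then 1 else 0))
          = ((if j ∈ I then (1 : ZMod d) else 0) - (if j ∈ J then 1 else 0)) := by
      intro i j
      have hm := h (fun k => (if k = i then (1 : ZMod d) else 0) - (if k = j then 1 else 0))
        (by rw [hsum]; simp)
      rw [hsum, hsum] at hm
      linear_combination hm
    have i0 : Fin n := ⟨0, by omega⟩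
    by_cases hI0 : i0 ∈ I <;> by_cases hJ0 : i0 ∈ J
    · -- λ = 0 : I = J
      left
      refine Finset.ext fun i => ?_
      have hi := key i i0
      rw [if_pos hI0, if_pos hJ0] at hi
      by_cases hiI : i ∈ I <;> by_cases hiJ : i ∈ J
      · exact iff_of_true hiI hiJ
      · rw [if_pos hiI, if_neg hiJ] at hi
        exact absurd (by linear_combination hi : (1 : ZMod d) = 0) h1
      · rw [if_neg hiI, if_pos hiJ] at hi
        exact absurd (by linear_combination hi : (-1 : ZMod d) = 0) hneg
      · exact iff_of_false hiI hiJ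
    · -- λ = 1 : I = univ, J = ∅
      right; right
      have hall : ∀ i : Fin n, i ∈ I ∧ i ∉ J := by
        intro i
        have hi := key i i0
        rw [if_pos hI0, if_neg hJ0] at hi
        by_cases hiI : i ∈ I <;> by_cases hiJ : i ∈ J
        · rw [if_pos hiI, if_pos hiJ] at hi
          exact absurd (by linear_combination -hi : (1 : ZMod d) = 0) h1
        · exact ⟨hiI, hiJ⟩
        · rw [if_neg hiI, if_pos hiJ] at hi
          exact absurd (by linear_combination -hi : (1 : ZMod d) = -1) h2
        · rw [if_neg hiI, if_neg hiJ] at hi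
          exact absurd (by linear_combination -hi : (1 : ZMod d) = 0) h1
      exact ⟨Finset.eq_univ_iff_forall.mpr fun i => (hall i).1,
        Finset.eq_empty_iff_forall_notMem.mpr fun i => (hall i).2⟩
    · -- λ = -1 : I = ∅, J = univ
      right; left
      have hall : ∀ i : Fin n, i ∉ I ∧ i ∈ J := by
        intro i
        have hi := key i i0
        rw [if_neg hI0, if_pos hJ0] at hi
        by_cases hiI : i ∈ I <;> by_cases hiJ : i ∈ J
        · rw [if_pos hiI, if_pos hiJ] at hi
          exact absurd (by linear_combination -hi : (-1 : ZMod d) = 0) hneg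
        · rw [if_pos hiI, if_neg hiJ] at hi
          exact absurd (by linear_combination hi : (1 : ZMod d) = -1) h2
        · exact ⟨hiI, hiJ⟩
        · rw [if_neg hiI, if_neg hiJ] at hi
          exact absurd (by linear_combination -hi : (-1 : ZMod d) = 0) hneg
      exact ⟨Finset.eq_empty_iff_forall_notMem.mpr fun i => (hall i).1,
        Finset.eq_univ_iff_forall.mpr fun i => (hall i).2⟩
    · -- λ = 0 : I = J
      left
      refine Finset.ext fun i => ?_
      have hi := key i i0
      rw [if_neg hI0, if_neg hJ0] at hi
      by_cases hiI : i ∈ I <;> by_cases hiJ : i ∈ J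
      · exact iff_of_true hiI hiJ
      · rw [if_pos hiI, if_neg hiJ] at hi
        exact absurd (by linear_combination hi : (1 : ZMod d) = 0) h1
      · rw [if_neg hiI, if_pos hiJ] at hi
        exact absurd (by linear_combination hi : (-1 : ZMod d) = 0) hneg
      · exact iff_of_false hiI hiJ
  · rintro (rfl | ⟨rfl, rfl⟩ | ⟨rfl, rfl⟩) m hm <;> simp [hm]

/-- For `d ≥ 3`, `n ≥ 2` and `0 ≤ p, q ≤ n`, the number of pairs `(I, J)` of
subsets of `{1,…,n}` with `|I| = p`, `|J| = q` such that every `m ∈ (ℤ/dℤ)ⁿ` with `∑ mᵢ = 0`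
satisfies `∑_{i∈I} mᵢ = ∑_{j∈J} mⱼ` equals `C(n,p)` if `p = q`; `1` if `(p,q) ∈ {(0,n),(n,0)}`;
and `0` otherwise. -/
theorem stmt_4 (d n p q : ℕ) (hd : 3 ≤ d) (hn : 2 ≤ n) (hp : p ≤ n) (hq : q ≤ n) :
    {IJ : Finset (Fin n) × Finset (Fin n) |
        IJ.1.card = p ∧ IJ.2.card = q ∧
        ∀ m : Fin n → ZMod d, ∑ i, m i = 0 →
          ∑ i ∈ IJ.1, m i = ∑ j ∈ IJ.2, m j}.ncard =
      if p = q then n.choose p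
      else if (p = 0 ∧ q = n) ∨ (p = n ∧ q = 0) then 1
      else 0 := by
  classical
  have hset : {IJ : Finset (Fin n) × Finset (Fin n) |
        IJ.1.card = p ∧ IJ.2.card = q ∧
        ∀ m : Fin n → ZMod d, ∑ i, m i = 0 →
          ∑ i ∈ IJ.1, m i = ∑ j ∈ IJ.2, m j} =
      {IJ : Finset (Fin n) × Finset (Fin n) |
        IJ.1.card = p ∧ IJ.2.card = q ∧
        (IJ.1 = IJ.2 ∨ (IJ.1 = ∅ ∧ IJ.2 = Finset.univ) ∨
          (IJ.1 = Finset.univ ∧ IJ.2 = ∅))} := by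
    ext ⟨I, J⟩
    simp only [Set.mem_setOf_eq, and_congr_right_iff]
    intro _ _
    exact inv_iff d n hd hn I J
  rw [hset]
  have hcard_univ : (Finset.univ : Finset (Fin n)).card = n := by
    rw [Finset.card_univ, Fintype.card_fin]
  by_cases hpq : p = q
  · subst hpq
    rw [if_pos rfl]
    have hEq : {IJ : Finset (Fin n) × Finset (Fin n) |
        IJ.1.card = p ∧ IJ.2.card = p ∧
        (IJ.1 = IJ.2 ∨ (IJ.1 = ∅ ∧ IJ.2 = Finset.univ) ∨
          (IJ.1 = Finset.univ ∧ IJ.2 = ∅))} =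
        (((Finset.univ.powersetCard p).image (fun I => (I, I)) :
          Finset (Finset (Fin n) × Finset (Fin n))) :
          Set (Finset (Fin n) × Finset (Fin n))) := by
      ext ⟨I, J⟩
      simp only [Set.mem_setOf_eq, Finset.coe_image, Set.mem_image, Finset.mem_coe,
        Finset.mem_powersetCard, Prod.mk.injEq]
      constructor
      · rintro ⟨hI, hJ, (rfl | ⟨rfl, rfl⟩ | ⟨rfl, rfl⟩)⟩
        · exact ⟨I, ⟨Finset.subset_univ _, hI⟩, rfl, rfl⟩
        · simp only [Finset.card_empty] at hI
          rw [hcard_univ] at hJ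
          omega
        · simp only [Finset.card_empty] at hJ
          rw [hcard_univ] at hI
          omega
      · rintro ⟨K, ⟨-, hK⟩, rfl, rfl⟩
        exact ⟨hK, hK, Or.inl rfl⟩
    rw [hEq, Set.ncard_coe_finset,
      Finset.card_image_of_injective _ (fun a b hab => (Prod.mk.injEq _ _ _ _ ▸ hab).1),
      Finset.card_powersetCard, hcard_univ]
  · rw [if_neg hpq]
    by_cases hc : (p = 0 ∧ q = n) ∨ (p = n ∧ q = 0)
    · rw [if_pos hc]
      rcases hc with ⟨hp0, hqn⟩ | ⟨hpn, hq0⟩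
      · have hEq : {IJ : Finset (Fin n) × Finset (Fin n) |
            IJ.1.card = p ∧ IJ.2.card = q ∧
            (IJ.1 = IJ.2 ∨ (IJ.1 = ∅ ∧ IJ.2 = Finset.univ) ∨
              (IJ.1 = Finset.univ ∧ IJ.2 = ∅))} =
            {((∅ : Finset (Fin n)), (Finset.univ : Finset (Fin n)))} := by
          ext ⟨I, J⟩
          simp only [Set.mem_setOf_eq, Set.mem_singleton_iff, Prod.mk.injEq]
          constructor
          · rintro ⟨hI, hJ, (rfl | ⟨rfl, rfl⟩ | ⟨rfl, rfl⟩)⟩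
            · exact absurd (hI ▸ hJ ▸ rfl) hpq
            · exact ⟨rfl, rfl⟩
            · rw [hcard_univ] at hI
              simp only [Finset.card_empty] at hJ
              omega
          · rintro ⟨rfl, rfl⟩
            exact ⟨by simp [hp0], by rw [hcard_univ, hqn], Or.inr (Or.inl ⟨rfl, rfl⟩)⟩
        rw [hEq, Set.ncard_singleton]
      · have hEq : {IJ : Finset (Fin n) × Finset (Fin n) |
            IJ.1.card = p ∧ IJ.2.card = q ∧
            (IJ.1 = IJ.2 ∨ (IJ.1 = ∅ ∧ IJ.2 = Finset.univ) ∨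
              (IJ.1 = Finset.univ ∧ IJ.2 = ∅))} =
            {((Finset.univ : Finset (Fin n)), (∅ : Finset (Fin n)))} := by
          ext ⟨I, J⟩
          simp only [Set.mem_setOf_eq, Set.mem_singleton_iff, Prod.mk.injEq]
          constructor
          · rintro ⟨hI, hJ, (rfl | ⟨rfl, rfl⟩ | ⟨rfl, rfl⟩)⟩
            · exact absurd (hI ▸ hJ ▸ rfl) hpq
            · rw [hcard_univ] at hJ
              simp only [Finset.card_empty] at hI
              omega
            · exact ⟨rfl, rfl⟩
          · rintro ⟨rfl, rfl⟩
            exact ⟨by rw [hcard_univ, hpn], by simp [hq0], Or.inr (Or.inr ⟨rfl, rfl⟩)⟩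
        rw [hEq, Set.ncard_singleton]
    · rw [if_neg hc]
      push_neg at hc
      have hEq : {IJ : Finset (Fin n) × Finset (Fin n) |
          IJ.1.card = p ∧ IJ.2.card = q ∧
          (IJ.1 = IJ.2 ∨ (IJ.1 = ∅ ∧ IJ.2 = Finset.univ) ∨
            (IJ.1 = Finset.univ ∧ IJ.2 = ∅))} = ∅ := by
        ext ⟨I, J⟩
        simp only [Set.mem_setOf_eq, Set.mem_empty_iff_false, iff_false, not_and]
        rintro hI hJ (rfl | ⟨rfl, rfl⟩ | ⟨rfl, rfl⟩)
        · exact hpq (hI ▸ hJ ▸ rfl)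
        · simp only [Finset.card_empty] at hI
          rw [hcard_univ] at hJ
          exact (hc.1 hI.symm) hJ.symm
        · simp only [Finset.card_empty] at hJ
          rw [hcard_univ] at hI
          exact (hc.2 hI.symm) hJ.symm
      rw [hEq, Set.ncard_empty]
end

section
/- Let n ≥ 1 and c : {1,…,n} → {A, B, C}. Consider the following ℤ/6ℤ-sets: S_A is a one-element set with trivial action; S_B = {0, 1, 2} on which k ∈ ℤ/6ℤ acts as the k-th power of the transposition (1 2) (fixing 0); S_C = {0, 1, 2, 3} on which k acts as the k-th power of the 3-cycle (1 2 3) (fixing 0). Let the group G = {m ∈ (ℤ/6ℤ)ⁿ : m₁ + ⋯ + mₙ = 0} act on the product X_c = Π_{i=1}^{n} S_{c(i)} coordinatewise, m_i acting on the i-th factor. If there exists i with c(i) = A, or there exist i, j with c(i) = B and c(j) = C, then the number of G-orbits on X_c equals 2^{w}, where w = #{i : c(i) ∈ {B, C}}. -/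
/-- Labels for the three kinds of ℤ/6ℤ-sets. -/
inductive Label : Type
  | A | B | C
  deriving DecidableEq

/-- The underlying set of each ℤ/6ℤ-set: `S_A` is a point, `S_B = {0,1,2}`,
`S_C = {0,1,2,3}`. -/
@[reducible] def fiber : Label → Type
  | .A => PUnit
  | .B => Fin 3
  | .C => Fin 4

/-- The permutation whose `k`-th power gives the action of `k ∈ ℤ/6ℤ`: trivial on `S_A`,
the transposition `(1 2)` on `S_B`, and the 3-cycle `(1 2 3)` (i.e. `1 ↦ 2 ↦ 3 ↦ 1`,
fixing `0`) on `S_C`. -/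
def labelPerm : (l : Label) → Equiv.Perm (fiber l)
  | .A => 1
  | .B => Equiv.swap 1 2
  | .C => Equiv.swap 1 2 * Equiv.swap 2 3


def zf : (l : Label) → fiber l → Bool
  | .A => fun _ => false
  | .B => fun v => decide (v ≠ 0)
  | .C => fun v => decide (v ≠ 0)

def pt : (l : Label) → Bool → fiber l
  | .A => fun _ => PUnit.unit
  | .B => fun b => if b then 1 else 0
  | .C => fun b => if b then 1 else 0

lemma pow_val_add (l : Label) (a b : ZMod 6) (v : fiber l) :
    (labelPerm l ^ ((a + b).val)) v = (labelPerm l ^ a.val) ((labelPerm l ^ b.val) v) := by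
  cases l <;> revert a b v <;> decide

lemma zf_pow (l : Label) (m : ZMod 6) (v : fiber l) :
    zf l ((labelPerm l ^ m.val) v) = zf l v := by cases l <;> revert m v <;> decide

lemma exists_exp (l : Label) (v w : fiber l) (h : zf l v = zf l w) :
    ∃ k : ZMod 6, (labelPerm l ^ k.val) v = w := by
  cases l <;> revert v w <;> decide

lemma exists_split (t : ZMod 6) :
    ∃ a b : ZMod 6, a + b = t ∧ (∀ v : fiber Label.B, (labelPerm Label.B ^ a.val) v = v)
      ∧ (∀ v : fiber Label.C, (labelPerm Label.C ^ b.val) v = v) := by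
  revert t; decide

lemma zf_pt (l : Label) (hl : l = Label.B ∨ l = Label.C) (β : Bool) : zf l (pt l β) = β := by
  rcases hl with rfl | rfl <;> cases β <;> decide

lemma zf_of_A (l : Label) (hl : l = Label.A) (v : fiber l) : zf l v = false := by
  subst hl; rfl

lemma triv_of_eq {l l' : Label} (hl : l = l') {k : ZMod 6}
    (h : ∀ v : fiber l', (labelPerm l' ^ k.val) v = v) :
    ∀ v : fiber l, (labelPerm l ^ k.val) v = v := by subst hl; exact h

lemma act_triv_add (l : Label) (a δ : ZMod 6) (v w : fiber l)
    (hδ : ∀ u : fiber l, (labelPerm l ^ δ.val) u = u)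
    (h : (labelPerm l ^ a.val) v = w) :
    (labelPerm l ^ ((a + δ).val)) v = w := by
  rw [pow_val_add, hδ, h]

/-- if some coordinate has type `A`, or there are coordinates of both types `B`
and `C`, then the number of orbits of `G = {m ∈ (ℤ/6ℤ)ⁿ : ∑ mᵢ = 0}` acting coordinatewise
on `∏ᵢ S_{c(i)}` equals `2^w` where `w = #{i : c i ∈ {B, C}}`. -/
theorem stmt_5 (n : ℕ) (hn : 1 ≤ n) (c : Fin n → Label)
    (h : (∃ i, c i = Label.A) ∨ (∃ i j, c i = Label.B ∧ c j = Label.C)) :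
    Nat.card (Quotient (Relation.EqvGen.setoid
      (fun x y : (i : Fin n) → fiber (c i) =>
        ∃ m : Fin n → ZMod 6, ∑ i, m i = 0 ∧
          ∀ i, (labelPerm (c i) ^ (m i).val) (x i) = y i))) =
      2 ^ (Finset.univ.filter fun i => c i = Label.B ∨ c i = Label.C).card := by
  set r : ((i : Fin n) → fiber (c i)) → ((i : Fin n) → fiber (c i)) → Prop :=
    fun x y => ∃ m : Fin n → ZMod 6, ∑ i, m i = 0 ∧
      ∀ i, (labelPerm (c i) ^ (m i).val) (x i) = y i with hrdef
  set P : Fin n → Prop := fun i => c i = Label.B ∨ c i = Label.C with hPdef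
  have instP : DecidablePred P := fun i => by unfold P; infer_instance
  set inv : ((i : Fin n) → fiber (c i)) → ({i // P i} → Bool) :=
    fun x j => zf (c j.1) (x j.1) with hinvdef
  -- invariance of `inv` under `r`
  have inv_r : ∀ x y, r x y → inv x = inv y := by
    rintro x y ⟨m, -, hm⟩
    funext j
    simp only [hinvdef]
    rw [← hm j.1, zf_pow]
  -- completeness: equal invariants give a single relation step
  have key : ∀ x y, inv x = inv y → r x y := by
    intro x y hxy
    have hz : ∀ i, zf (c i) (x i) = zf (c i) (y i) := by
      intro i
      by_cases hi : P i
      · exact congrFun hxy ⟨i, hi⟩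
      · have hA : c i = Label.A := by
          rcases h' : c i with _ | _ | _
          · rfl
          · exact absurd (Or.inl h') hi
          · exact absurd (Or.inr h') hi
        rw [zf_of_A _ hA, zf_of_A _ hA]
    choose m0 hm0 using fun i => exists_exp (c i) (x i) (y i) (hz i)
    set s : ZMod 6 := ∑ i, m0 i with hs
    rcases h with ⟨i0, hA⟩ | ⟨i0, j0, hB, hC⟩
    · refine ⟨m0 + Pi.single i0 (-s), ?_, ?_⟩
      · simp only [Pi.add_apply]
        rw [Finset.sum_add_distrib, Finset.sum_pi_single']
        simp [hs]
      · intro i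
        by_cases hii : i = i0
        · subst hii
          have : Subsingleton (fiber (c i)) := by rw [hA]; infer_instance
          exact Subsingleton.elim _ _
        · simp only [Pi.add_apply, Pi.single_eq_of_ne hii, add_zero]
          exact hm0 i
    · have hne : i0 ≠ j0 := fun e => by rw [e, hC] at hB; exact Label.noConfusion hB
      obtain ⟨a, b, hab, haB, hbC⟩ := exists_split (-s)
      refine ⟨m0 + (Pi.single i0 a + Pi.single j0 b), ?_, ?_⟩
      · simp only [Pi.add_apply]
        rw [Finset.sum_add_distrib, Finset.sum_add_distrib, Finset.sum_pi_single',
          Finset.sum_pi_single']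
        simp only [Finset.mem_univ, if_true]
        rw [← hs, hab, add_neg_cancel]
      · intro i
        by_cases hii : i = i0
        · subst hii
          simp only [Pi.add_apply, Pi.single_eq_same, Pi.single_eq_of_ne hne, add_zero]
          exact act_triv_add _ _ _ _ _ (triv_of_eq hB haB) (hm0 i)
        · by_cases hij : i = j0
          · subst hij
            simp only [Pi.add_apply, Pi.single_eq_of_ne hii, Pi.single_eq_same, zero_add]
            exact act_triv_add _ _ _ _ _ (triv_of_eq hC hbC) (hm0 i)
          · simp only [Pi.add_apply, Pi.single_eq_of_ne hii, Pi.single_eq_of_ne hij,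
              add_zero]
            exact hm0 i
  -- the quotient map
  let F : Quotient (Relation.EqvGen.setoid r) → ({i // P i} → Bool) :=
    Quotient.lift inv (by
      intro x y hxy
      induction hxy with
      | rel x y hxy => exact inv_r x y hxy
      | refl => rfl
      | symm _ _ _ ih => exact ih.symm
      | trans _ _ _ _ _ ih1 ih2 => exact ih1.trans ih2)
  have hbij : Function.Bijective F := by
    constructor
    · intro q1 q2
      induction q1 using Quotient.inductionOn with | h x =>
      induction q2 using Quotient.inductionOn with | h y =>
      intro hF
      exact Quotient.sound (Relation.EqvGen.rel _ _ (key x y hF))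
    · intro b
      refine ⟨Quotient.mk _ (fun i => pt (c i) (if hi : P i then b ⟨i, hi⟩ else false)), ?_⟩
      funext j
      show zf (c j.1) (pt (c j.1) _) = b j
      rw [dif_pos j.2, zf_pt _ j.2]
  rw [Nat.card_eq_of_bijective F hbij, Nat.card_eq_fintype_card]
  rw [Fintype.card_fun, Fintype.card_bool, Fintype.card_subtype]
  have hfilter : Finset.filter (fun x => P x) Finset.univ
      = Finset.filter (fun i => c i = Label.B ∨ c i = Label.C) Finset.univ := by
    ext i; simp [hPdef]
  rw [hfilter]
  congr!
end

section
/- Let n ≥ 1. Let S_C = {0, 1, 2, 3} be the ℤ/6ℤ-set on which k ∈ ℤ/6ℤ acts as the k-th power of the 3-cycle (1 2 3) (fixing 0). Let the group G = {m ∈ (ℤ/6ℤ)ⁿ : m₁ + ⋯ + mₙ = 0} act on the product (S_C)ⁿ coordinatewise, m_i acting on the i-th factor. Then the number of G-orbits equals 2ⁿ + 2. -/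
private def σ4 : Equiv.Perm (Fin 4) := Equiv.swap 1 2 * Equiv.swap 2 3

private def rr : Fin 4 → ZMod 3 := fun a => ((a : ℕ) : ZMod 3) - 1

private lemma d36 : (3:ℕ) ∣ 6 := by decide

private lemma σ4_pow3 : σ4 ^ 3 = 1 := by decide

private lemma σ4_pow_mod (k : ℕ) : σ4 ^ k = σ4 ^ (k % 3) := by
  conv_lhs => rw [← Nat.div_add_mod k 3, pow_add, pow_mul, σ4_pow3, one_pow, one_mul]

private lemma val_mod3 : ∀ a : ZMod 6,
    a.val % 3 = (ZMod.castHom d36 (ZMod 3) a).val := by decide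

private lemma trans3 : ∀ a b : Fin 4, a ≠ 0 → b ≠ 0 → ∃ k : Fin 3, (σ4 ^ (k : ℕ)) a = b := by
  decide

private lemma zero_fix_b : ∀ j : ℕ, j < 3 → (σ4 ^ j) 0 = 0 := by decide

private lemma zero_fix (k : ℕ) : (σ4 ^ k) 0 = 0 := by
  rw [σ4_pow_mod]; exact zero_fix_b _ (Nat.mod_lt _ (by norm_num))

private lemma nz_pow (k : ℕ) (a : Fin 4) (ha : a ≠ 0) : (σ4 ^ k) a ≠ 0 := by
  intro h
  exact ha ((σ4 ^ k).injective (h.trans (zero_fix k).symm))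

private lemma r_pow_b : ∀ j : ℕ, j < 3 → ∀ a : Fin 4, a ≠ 0 →
    rr ((σ4 ^ j) a) = rr a + (j : ZMod 3) := by decide

private lemma r_pow (k : ℕ) (a : Fin 4) (ha : a ≠ 0) :
    rr ((σ4 ^ k) a) = rr a + (k : ZMod 3) := by
  rw [σ4_pow_mod, ← ZMod.natCast_mod k 3]
  exact r_pow_b _ (Nat.mod_lt _ (by norm_num)) a ha

private abbrev Tgt (n : ℕ) := {s : Finset (Fin n) // s.Nonempty} ⊕ ZMod 3

private instance (n : ℕ) : Fintype (Tgt n) := by unfold Tgt; infer_instance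

private def Tset {n : ℕ} (x : Fin n → Fin 4) : Finset (Fin n) :=
  Finset.univ.filter (fun i => x i = 0)

private lemma mem_Tset {n : ℕ} (x : Fin n → Fin 4) (i : Fin n) :
    i ∈ Tset x ↔ x i = 0 := by simp [Tset]

private def fmap {n : ℕ} (x : Fin n → Fin 4) : Tgt n :=
  if h : (Tset x).Nonempty then Sum.inl ⟨Tset x, h⟩ else Sum.inr (∑ i, rr (x i))

private lemma fmap_eq {n : ℕ} (x y : Fin n → Fin 4)
    (m : Fin n → ZMod 6) (hm : ∑ i, m i = 0)
    (hxy : ∀ i, (σ4 ^ (m i).val) (x i) = y i) : fmap x = fmap y := by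
  have hT : Tset x = Tset y := by
    ext i
    simp only [mem_Tset]
    constructor
    · intro h; rw [← hxy i, h, zero_fix]
    · intro h
      by_contra hx
      exact nz_pow _ _ hx (by rw [hxy i]; exact h)
  unfold fmap
  simp only [hT]
  by_cases h : (Tset y).Nonempty
  · rw [dif_pos h, dif_pos h]
  · rw [dif_neg h, dif_neg h]
    congr 1
    have hx0 : ∀ i, x i ≠ 0 := by
      intro i hi
      rw [← hT] at h
      exact h ⟨i, (mem_Tset x i).mpr hi⟩
    have e : ∀ i, rr (y i) = rr (x i) + (((m i).val : ℕ) : ZMod 3) := by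
      intro i; rw [← hxy i, r_pow _ _ (hx0 i)]
    rw [Finset.sum_congr rfl (fun i _ => e i), Finset.sum_add_distrib]
    have : ∑ i, (((m i).val : ℕ) : ZMod 3) = 0 := by
      have : ∀ i : Fin n, (((m i).val : ℕ) : ZMod 3) = ZMod.castHom d36 (ZMod 3) (m i) := by
        intro i; rw [ZMod.natCast_val, ZMod.castHom_apply]
      rw [Finset.sum_congr rfl (fun i _ => this i), ← map_sum, hm, map_zero]
    rw [this, add_zero]

private lemma build_rel {n : ℕ} (hn : 1 ≤ n) (x y : Fin n → Fin 4) (c : Fin n → ℕ)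
    (hclt : ∀ i, c i < 3) (hc : ∀ i, (σ4 ^ c i) (x i) = y i)
    (H : (∃ i0, x i0 = 0) ∨ (∑ i, ((c i : ℕ) : ZMod 3)) = 0) :
    ∃ m : Fin n → ZMod 6, ∑ i, m i = 0 ∧ ∀ i, (σ4 ^ (m i).val) (x i) = y i := by
  obtain ⟨i0, hi0⟩ : ∃ i0 : Fin n, x i0 = 0 ∨ (∑ i, ((c i : ℕ) : ZMod 3)) = 0 := by
    rcases H with ⟨i0, h⟩ | h
    · exact ⟨i0, Or.inl h⟩
    · exact ⟨⟨0, hn⟩, Or.inr h⟩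
  set S : ZMod 6 := ∑ j, ((c j : ℕ) : ZMod 6) with hS
  refine ⟨fun i => ((c i : ℕ) : ZMod 6) + (if i = i0 then -S else 0), ?_, ?_⟩
  · rw [Finset.sum_add_distrib, Finset.sum_ite_eq' Finset.univ i0 (fun _ => -S)]
    simp [← hS]
  · intro i
    by_cases hii : i = i0
    · subst hii
      show (σ4 ^ (((c i : ℕ) : ZMod 6) + if i = i then -S else 0).val) (x i) = y i
      rw [if_pos rfl]
      rcases hi0 with h0 | hsum
      · have hy0 : y i = 0 := by rw [← hc i, h0, zero_fix]
        rw [h0, zero_fix, hy0]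
      · have hcast : ZMod.castHom d36 (ZMod 3) (((c i : ℕ) : ZMod 6) + -S)
            = ((c i : ℕ) : ZMod 3) := by
          rw [map_add, map_neg, map_natCast, hS, map_sum]
          simp only [map_natCast]
          rw [hsum, neg_zero, add_zero]
        rw [σ4_pow_mod, val_mod3, hcast, ZMod.val_natCast,
          Nat.mod_eq_of_lt (hclt i), hc i]
    · show (σ4 ^ (((c i : ℕ) : ZMod 6) + if i = i0 then -S else 0).val) (x i) = y i
      rw [if_neg hii, add_zero, ZMod.val_natCast, Nat.mod_eq_of_lt (lt_trans (hclt i) (by norm_num)), hc i]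

private lemma fmap_inj {n : ℕ} (hn : 1 ≤ n) (x y : Fin n → Fin 4) (h : fmap x = fmap y) :
    ∃ m : Fin n → ZMod 6, ∑ i, m i = 0 ∧ ∀ i, (σ4 ^ (m i).val) (x i) = y i := by
  unfold fmap at h
  by_cases hx : (Tset x).Nonempty <;> by_cases hy : (Tset y).Nonempty
  · rw [dif_pos hx, dif_pos hy] at h
    have hT : Tset x = Tset y := by
      have := Sum.inl.inj h
      exact congrArg Subtype.val this
    have hT' : ∀ i, x i = 0 ↔ y i = 0 := by
      intro i
      rw [← mem_Tset x i, ← mem_Tset y i, hT]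
    have hex : ∀ i, ∃ k : ℕ, k < 3 ∧ (σ4 ^ k) (x i) = y i := by
      intro i
      by_cases h0 : x i = 0
      · exact ⟨0, by norm_num, by rw [pow_zero]; simp [h0, ((hT' i).mp h0).symm]⟩
      · obtain ⟨k, hk⟩ := trans3 (x i) (y i) h0 (fun hy0 => h0 ((hT' i).mpr hy0))
        exact ⟨k, k.isLt, hk⟩
    choose c hclt hc using hex
    obtain ⟨i0, hi0⟩ := hx
    exact build_rel hn x y c hclt hc (Or.inl ⟨i0, (mem_Tset x i0).mp hi0⟩)
  · rw [dif_pos hx, dif_neg hy] at h; exact absurd h (by simp)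
  · rw [dif_neg hx, dif_pos hy] at h; exact absurd h (by simp)
  · rw [dif_neg hx, dif_neg hy] at h
    have hsum : ∑ i, rr (x i) = ∑ i, rr (y i) := Sum.inr.inj h
    have hx0 : ∀ i, x i ≠ 0 := fun i hi => hx ⟨i, (mem_Tset x i).mpr hi⟩
    have hy0 : ∀ i, y i ≠ 0 := fun i hi => hy ⟨i, (mem_Tset y i).mpr hi⟩
    have hex : ∀ i, ∃ k : ℕ, k < 3 ∧ (σ4 ^ k) (x i) = y i := by
      intro i
      obtain ⟨k, hk⟩ := trans3 (x i) (y i) (hx0 i) (hy0 i)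
      exact ⟨k, k.isLt, hk⟩
    choose c hclt hc using hex
    have hcs : ∑ i, ((c i : ℕ) : ZMod 3) = 0 := by
      have e : ∀ i, ((c i : ℕ) : ZMod 3) = rr (y i) - rr (x i) := by
        intro i; rw [← hc i, r_pow _ _ (hx0 i)]; ring
      rw [Finset.sum_congr rfl (fun i _ => e i), Finset.sum_sub_distrib, ← hsum, sub_self]
    exact build_rel hn x y c hclt hc (Or.inr hcs)

private lemma fmap_surj {n : ℕ} (hn : 1 ≤ n) (t : Tgt n) : ∃ x, fmap x = t := by
  obtain ⟨s, hs⟩ | c := t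
  · refine ⟨fun i => if i ∈ s then 0 else 1, ?_⟩
    have hT : Tset (fun i => if i ∈ s then 0 else 1) = s := by
      ext i
      rw [mem_Tset]
      by_cases his : i ∈ s <;> simp [his]
    unfold fmap
    simp only [hT]
    rw [dif_pos hs]
  · have hcv : c.val < 3 := ZMod.val_lt c
    refine ⟨fun i => if i = ⟨0, hn⟩ then ⟨c.val + 1, by omega⟩ else 1, ?_⟩
    have hne : ∀ i, (if i = (⟨0, hn⟩ : Fin n) then (⟨c.val + 1, by omega⟩ : Fin 4) else 1) ≠ 0 := by
      intro i; split
      · simp [Fin.ext_iff]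
      · decide
    have hT : Tset (fun i => if i = ⟨0, hn⟩ then (⟨c.val + 1, by omega⟩ : Fin 4) else 1)
        = (∅ : Finset (Fin n)) := by
      ext i
      rw [mem_Tset]
      simp only [Finset.notMem_empty, iff_false]
      exact hne i
    unfold fmap
    simp only [hT]
    rw [dif_neg (by simp)]
    congr 1
    have e : ∀ i : Fin n, rr (if i = ⟨0, hn⟩ then (⟨c.val + 1, by omega⟩ : Fin 4) else 1)
        = if i = ⟨0, hn⟩ then c else 0 := by
      intro i
      by_cases hi : i = ⟨0, hn⟩
      · rw [if_pos hi, if_pos hi]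
        show ((c.val + 1 : ℕ) : ZMod 3) - 1 = c
        push_cast
        rw [ZMod.natCast_val, ZMod.cast_id]
        ring
      · rw [if_neg hi, if_neg hi]
        show ((1 : Fin 4) : ℕ) - 1 = (0 : ZMod 3)
        decide
    rw [Finset.sum_congr rfl (fun i _ => e i),
      Finset.sum_ite_eq' Finset.univ (⟨0, hn⟩ : Fin n) (fun _ => c)]
    simp

/-- Let `S_C = {0,1,2,3}` with `k ∈ ℤ/6ℤ` acting as the `k`-th power of the
3-cycle `(1 2 3)` (fixing `0`). Then the number of orbits of
`G = {m ∈ (ℤ/6ℤ)ⁿ : ∑ mᵢ = 0}` acting coordinatewise on `(S_C)ⁿ` equals `2ⁿ + 2`. -/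
theorem stmt_6 (n : ℕ) (hn : 1 ≤ n) :
    Nat.card (Quotient (Relation.EqvGen.setoid
      (fun x y : Fin n → Fin 4 =>
        ∃ m : Fin n → ZMod 6, ∑ i, m i = 0 ∧
          ∀ i, ((Equiv.swap 1 2 * Equiv.swap 2 3 : Equiv.Perm (Fin 4)) ^ (m i).val)
            (x i) = y i))) =
      2 ^ n + 2 := by
  simp only [show (Equiv.swap 1 2 * Equiv.swap 2 3 : Equiv.Perm (Fin 4)) = σ4 from rfl]
  set R : (Fin n → Fin 4) → (Fin n → Fin 4) → Prop :=
    fun x y => ∃ m : Fin n → ZMod 6, ∑ i, m i = 0 ∧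
      ∀ i, (σ4 ^ (m i).val) (x i) = y i with hR
  have hlift : ∀ a b : Fin n → Fin 4, Relation.EqvGen R a b → fmap a = fmap b := by
    intro a b h
    induction h with
    | rel _ _ h => obtain ⟨m, hm, hxy⟩ := h; exact fmap_eq _ _ m hm hxy
    | refl => rfl
    | symm _ _ _ ih => exact ih.symm
    | trans _ _ _ _ _ ih1 ih2 => exact ih1.trans ih2
  have hbij : Function.Bijective (Quotient.lift fmap hlift :
      Quotient (Relation.EqvGen.setoid R) → Tgt n) := by
    constructor
    · intro u v
      induction u using Quotient.inductionOn with | _ a =>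
      induction v using Quotient.inductionOn with | _ b =>
      intro h
      exact Quotient.sound (Relation.EqvGen.rel _ _ (fmap_inj hn a b h))
    · intro t
      obtain ⟨x, hx⟩ := fmap_surj hn t
      exact ⟨⟦x⟧, hx⟩
  rw [Nat.card_eq_of_bijective _ hbij, Nat.card_eq_fintype_card]
  have h1 : Fintype.card {s : Finset (Fin n) // s.Nonempty} = 2 ^ n - 1 := by
    rw [Fintype.card_congr (Equiv.subtypeEquivRight
      (fun s => Finset.nonempty_iff_ne_empty))]
    have := Fintype.card_subtype_compl (fun s : Finset (Fin n) => s = ∅)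
    rw [Fintype.card_subtype_eq, Fintype.card_finset, Fintype.card_fin] at this
    exact this
  have h2 : (1:ℕ) ≤ 2 ^ n := Nat.one_le_two_pow
  show Fintype.card ({s : Finset (Fin n) // s.Nonempty} ⊕ ZMod 3) = 2 ^ n + 2
  rw [Fintype.card_sum, h1, ZMod.card]
  omega
end

section
/- Let n ≥ 1. Let S_B = {0, 1, 2} be the ℤ/6ℤ-set on which k ∈ ℤ/6ℤ acts as the k-th power of the transposition (1 2) (fixing 0). Let the group G = {m ∈ (ℤ/6ℤ)ⁿ : m₁ + ⋯ + mₙ = 0} act on the product (S_B)ⁿ coordinatewise, m_i acting on the i-th factor. Then the number of G-orbits equals 2ⁿ + 1. -/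
namespace Stmt7

local notation "σ" => Equiv.swap (1 : Fin 3) 2

def φ : ZMod 6 →+ ZMod 2 where
  toFun m := (m.val : ZMod 2)
  map_zero' := by decide
  map_add' := by decide

def ν : Fin 3 → ZMod 2 := ![0, 0, 1]

lemma ssq : σ ^ 2 = 1 := by
  rw [pow_two]; exact Equiv.swap_mul_self 1 2

lemma pow_mod (k : ℕ) : σ ^ k = σ ^ (k % 2) := by
  conv_lhs => rw [← Nat.div_add_mod k 2]
  rw [pow_add, pow_mul, ssq, one_pow, one_mul]

lemma pow_val (m : ZMod 6) : σ ^ m.val = σ ^ (φ m).val := by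
  rw [pow_mod, pow_mod (φ m).val]
  congr 1
  revert m; decide

lemma act_zero_iff (k : ℕ) (a : Fin 3) : (σ ^ k) a = 0 ↔ a = 0 := by
  rw [pow_mod]
  rcases Nat.mod_two_eq_zero_or_one k with h | h <;> rw [h] <;> revert a <;> decide

lemma L2 (c : ZMod 2) (a : Fin 3) (h : a ≠ 0) : ν ((σ ^ c.val) a) = ν a + c := by
  revert c a; decide

lemma L1 (a b : Fin 3) (h : a = 0 ↔ b = 0) :
    (σ ^ (φ (if a = b then 0 else 1)).val) a = b := by
  revert a b; decide

lemma L3 (a b : Fin 3) (ha : a ≠ 0) (hb : b ≠ 0) :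
    φ (if a = b then 0 else 1) = ν a + ν b := by
  revert a b; decide

variable {n : ℕ}

def R (n : ℕ) : (Fin n → Fin 3) → (Fin n → Fin 3) → Prop :=
  fun x y => ∃ m : Fin n → ZMod 6, ∑ i, m i = 0 ∧
    ∀ i, (Equiv.swap (1 : Fin 3) 2 ^ (m i).val) (x i) = y i

def zs (x : Fin n → Fin 3) : Finset (Fin n) := Finset.univ.filter (fun i => x i = 0)

def par (x : Fin n → Fin 3) : ZMod 2 := ∑ i, ν (x i)

lemma ne_zero_of_zs {x : Fin n → Fin 3} (hx : zs x = ∅) (i : Fin n) : x i ≠ 0 := by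
  intro h
  have : i ∈ zs x := by simp [zs, h]
  rw [hx] at this
  exact absurd this (Finset.notMem_empty i)

lemma R_zs {x y : Fin n → Fin 3} (h : R n x y) : zs x = zs y := by
  obtain ⟨m, -, hm⟩ := h
  ext i
  simp only [zs, Finset.mem_filter, Finset.mem_univ, true_and]
  rw [← hm i, act_zero_iff]

lemma R_par {x y : Fin n → Fin 3} (h : R n x y) (hx : zs x = ∅) : par x = par y := by
  obtain ⟨m, hsum, hm⟩ := h
  symm
  calc par y = ∑ i, ν ((σ ^ (φ (m i)).val) (x i)) := by
        unfold par; congr 1; ext i; rw [← pow_val, hm i]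
    _ = ∑ i, (ν (x i) + φ (m i)) := by
        apply Finset.sum_congr rfl
        intro i _
        exact L2 _ _ (ne_zero_of_zs hx i)
    _ = par x + φ (∑ i, m i) := by rw [Finset.sum_add_distrib, map_sum]; rfl
    _ = par x := by rw [hsum, map_zero, add_zero]

lemma R_of (hn : 1 ≤ n) {x y : Fin n → Fin 3} (hzs : zs x = zs y)
    (hpar : zs x = ∅ → par x = par y) : R n x y := by
  have hiff : ∀ i, x i = 0 ↔ y i = 0 := by
    intro i
    have := Finset.ext_iff.mp hzs i
    simpa [zs] using this
  set ε : Fin n → ZMod 6 := fun i => if x i = y i then 0 else 1 with hε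
  obtain ⟨i₀, hi₀⟩ : ∃ i₀ : Fin n, zs x ≠ ∅ → x i₀ = 0 := by
    by_cases h : zs x = ∅
    · exact ⟨⟨0, hn⟩, fun h' => absurd h h'⟩
    · obtain ⟨i, hi⟩ := Finset.nonempty_iff_ne_empty.mpr h
      exact ⟨i, fun _ => by simpa [zs] using hi⟩
  refine ⟨fun i => ε i + if i = i₀ then -∑ j, ε j else 0, ?_, ?_⟩
  · rw [Finset.sum_add_distrib, Finset.sum_ite_eq' Finset.univ i₀]
    simp
  · intro i
    by_cases hi : i = i₀
    · subst hi
      by_cases hz : zs x = ∅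
      · -- parity of the correction term is trivial
        have hφsum : φ (∑ j, ε j) = 0 := by
          rw [map_sum]
          have : ∀ j ∈ Finset.univ, φ (ε j) = ν (x j) + ν (y j) := by
            intro j _
            exact L3 _ _ (ne_zero_of_zs hz j) (ne_zero_of_zs (hzs ▸ hz) j)
          rw [Finset.sum_congr rfl this, Finset.sum_add_distrib]
          have := hpar hz
          unfold par at this
          rw [← this]
          have h2 : ∀ a : ZMod 2, a + a = 0 := by decide
          exact h2 _
        show (σ ^ (ε i + if i = i then -∑ j, ε j else 0).val) (x i) = y i
        rw [if_pos rfl, pow_val]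
        have hφ : φ (ε i + -∑ j, ε j) = φ (ε i) := by
          rw [map_add, map_neg, hφsum, neg_zero, add_zero]
        rw [hφ]
        exact L1 _ _ (hiff i)
      · have hx0 : x i = 0 := hi₀ hz
        have hy0 : y i = 0 := (hiff i).mp hx0
        rw [hx0, hy0, (act_zero_iff _ _).mpr rfl]
    · simp only [if_neg hi, add_zero]
      rw [pow_val]
      exact L1 _ _ (hiff i)

def Idx (n : ℕ) := {A : Finset (Fin n) // A ≠ ∅} ⊕ ZMod 2

instance : Fintype (Idx n) := by unfold Idx; infer_instance

def inv (x : Fin n → Fin 3) : Idx n :=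
  if h : zs x = ∅ then .inr (par x) else .inl ⟨zs x, h⟩

lemma inv_eq_of {x y : Fin n → Fin 3} (h : R n x y) : inv x = inv y := by
  have hz := R_zs h
  unfold inv
  unfold Idx
  rw [hz]
  split
  · exact congrArg Sum.inr (R_par h (by rw [hz]; assumption))
  · rfl

lemma inv_sound {x y : Fin n → Fin 3} (h : Relation.EqvGen (R n) x y) : inv x = inv y := by
  induction h with
  | rel _ _ h => exact inv_eq_of h
  | refl => rfl
  | symm _ _ _ ih => exact ih.symm
  | trans _ _ _ _ _ ih1 ih2 => exact ih1.trans ih2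

lemma R_of_inv_eq (hn : 1 ≤ n) {x y : Fin n → Fin 3} (h : inv x = inv y) : R n x y := by
  unfold inv at h
  unfold Idx at h
  by_cases hx : zs x = ∅ <;> by_cases hy : zs y = ∅ <;> simp only [hx, hy, dif_pos, dif_neg,
    dite_true, dite_false] at h
  · exact R_of hn (hx.trans hy.symm) (fun _ => Sum.inr.inj h)
  · exact absurd h (by simp)
  · exact absurd h (by simp)
  · exact R_of hn (congrArg Subtype.val (Sum.inl.inj h)) (fun he => absurd he hx)

lemma inv_surj (hn : 1 ≤ n) : Function.Surjective (inv (n := n)) := by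
  rintro (⟨A, hA⟩ | c)
  · refine ⟨fun i => if i ∈ A then 0 else 1, ?_⟩
    have hz : zs (fun i => if i ∈ A then (0 : Fin 3) else 1) = A := by
      ext i
      simp only [zs, Finset.mem_filter, Finset.mem_univ, true_and]
      by_cases hi : i ∈ A <;> simp [hi]
    simp [inv, hz, hA]
    rfl
  · rcases (show c = 0 ∨ c = 1 by revert c; decide) with rfl | rfl
    · refine ⟨fun _ => 1, ?_⟩
      have hz : zs (fun _ : Fin n => (1 : Fin 3)) = ∅ := by
        ext i; simp [zs]
      have hp : par (fun _ : Fin n => (1 : Fin 3)) = 0 := by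
        unfold par
        have : ∀ i ∈ Finset.univ, ν ((fun _ : Fin n => (1 : Fin 3)) i) = 0 := by
          intro i _; rfl
        rw [Finset.sum_congr rfl this, Finset.sum_const, smul_zero]
      simp [inv, hz, hp]
      rfl
    · refine ⟨fun i => if i = ⟨0, hn⟩ then 2 else 1, ?_⟩
      have hz : zs (fun i => if i = (⟨0, hn⟩ : Fin n) then (2 : Fin 3) else 1) = ∅ := by
        ext i
        simp only [zs, Finset.mem_filter, Finset.mem_univ, true_and, Finset.notMem_empty,
          iff_false]
        by_cases hi : i = ⟨0, hn⟩ <;> simp [hi]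
      have hp : par (fun i => if i = (⟨0, hn⟩ : Fin n) then (2 : Fin 3) else 1) = 1 := by
        unfold par
        have : ∀ i ∈ Finset.univ,
            ν (if i = (⟨0, hn⟩ : Fin n) then (2 : Fin 3) else 1)
              = if i = (⟨0, hn⟩ : Fin n) then (1 : ZMod 2) else 0 := by
          intro i _
          by_cases hi : i = ⟨0, hn⟩ <;> simp [hi] <;> rfl
        rw [Finset.sum_congr rfl this, Finset.sum_ite_eq' Finset.univ]
        simp
      simp [inv, hz, hp]
      rfl

lemma card_Idx (n : ℕ) (hn : 1 ≤ n) : Nat.card (Idx n) = 2 ^ n + 1 := by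
  rw [Nat.card_eq_fintype_card]
  have h1 : Fintype.card (Idx n) = Fintype.card {A : Finset (Fin n) // A ≠ ∅} + 2 := by
    unfold Idx
    rw [Fintype.card_sum, ZMod.card]
  have h2 : Fintype.card {A : Finset (Fin n) // A ≠ ∅} = 2 ^ n - 1 := by
    have := Fintype.card_subtype_compl (fun A : Finset (Fin n) => A = ∅)
    rw [Fintype.card_subtype_eq, Fintype.card_finset, Fintype.card_fin] at this
    exact this
  have h3 : 1 ≤ 2 ^ n := Nat.one_le_two_pow
  rw [h1, h2]
  omega

lemma main (n : ℕ) (hn : 1 ≤ n) :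
    Nat.card (Quotient (Relation.EqvGen.setoid (R n))) = 2 ^ n + 1 := by
  have e : Quotient (Relation.EqvGen.setoid (R n)) ≃ Idx n := by
    refine Equiv.ofBijective (Quotient.lift inv (fun a b h => inv_sound h)) ⟨?_, ?_⟩
    · intro a b
      induction a using Quotient.inductionOn with | h x =>
      induction b using Quotient.inductionOn with | h y =>
      intro h
      exact Quotient.sound (Relation.EqvGen.rel _ _ (R_of_inv_eq hn h))
    · intro i
      obtain ⟨x, hx⟩ := inv_surj hn i
      exact ⟨Quotient.mk _ x, hx⟩
  rw [Nat.card_congr e]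
  exact card_Idx n hn

end Stmt7

/-- Let `S_B = {0,1,2}` with `k ∈ ℤ/6ℤ` acting as the `k`-th power of the
transposition `(1 2)` (fixing `0`). Then the number of orbits of
`G = {m ∈ (ℤ/6ℤ)ⁿ : ∑ mᵢ = 0}` acting coordinatewise on `(S_B)ⁿ` equals `2ⁿ + 1`. -/
theorem stmt_7 (n : ℕ) (hn : 1 ≤ n) :
    Nat.card (Quotient (Relation.EqvGen.setoid
      (fun x y : Fin n → Fin 3 =>
        ∃ m : Fin n → ZMod 6, ∑ i, m i = 0 ∧
          ∀ i, (Equiv.swap (1 : Fin 3) 2 ^ (m i).val) (x i) = y i))) =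
      2 ^ n + 1 :=
  Stmt7.main n hn
end

section
/- Let n ≥ 2 and let R = ℂ[x₁,…,xₙ,y₁,…,yₙ]/(y_i² + y_i − x_i³ : 1 ≤ i ≤ n) be the coordinate ring of the product of the n curves y_i² + y_i = x_i³. Let ζ₃ ∈ ℂ be a primitive cube root of unity, and for each k with 1 ≤ k ≤ n−1 let σ_k be the ℂ-algebra automorphism of R determined by σ_k(x_k) = ζ₃x_k, σ_k(xₙ) = ζ₃xₙ, σ_k(x_i) = x_i for i ∉ {k, n}, and σ_k(y_i) = y_i for all i. Then the subalgebra of elements of R fixed by σ₁,…,σ_{n−1} equals the ℂ-subalgebra of R generated by y₁, y₂, …, yₙ, x₁x₂⋯x_{n−1}xₙ², and x₁²x₂²⋯x_{n−1}²xₙ. -/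
open MvPolynomial

/-- The coordinate ring `R = ℂ[x₁,…,xₙ,y₁,…,yₙ]/(yᵢ² + yᵢ - xᵢ³ : 1 ≤ i ≤ n)` of the product
of the `n` curves `yᵢ² + yᵢ = xᵢ³`.  The variable `Sum.inl i` is `xᵢ` and `Sum.inr i` is
`yᵢ`. -/
noncomputable abbrev cubicRing (n : ℕ) : Type :=
  MvPolynomial (Fin n ⊕ Fin n) ℂ ⧸
    Ideal.span (Set.range fun i : Fin n =>
      (X (Sum.inr i) : MvPolynomial (Fin n ⊕ Fin n) ℂ) ^ 2 + X (Sum.inr i) - X (Sum.inl i) ^ 3)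

/-- The class of `xᵢ` in `R`. -/
noncomputable def xc (n : ℕ) (i : Fin n) : cubicRing n :=
  Ideal.Quotient.mk _ (X (Sum.inl i))

/-- The class of `yᵢ` in `R`. -/
noncomputable def yc (n : ℕ) (i : Fin n) : cubicRing n :=
  Ideal.Quotient.mk _ (X (Sum.inr i))

section Diag
variable {σ : Type*} [Fintype σ]

lemma diag_monomial (c : σ → ℂ) (a : σ →₀ ℕ) (b : ℂ) :
    aeval (fun v => (C (c v) * X v : MvPolynomial σ ℂ)) (monomial a b)
      = C (∏ v, c v ^ a v) * monomial a b := by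
  rw [aeval_monomial, monomial_eq]
  rw [Finsupp.prod_pow, Finsupp.prod_pow]
  simp only [mul_pow, ← C_pow]
  rw [Finset.prod_mul_distrib, ← map_prod C (fun v => c v ^ a v)]
  simp only [algebraMap_eq]
  ring

lemma diag_coeff [DecidableEq σ] (c : σ → ℂ) (p : MvPolynomial σ ℂ) (a : σ →₀ ℕ) :
    coeff a (aeval (fun v => (C (c v) * X v : MvPolynomial σ ℂ)) p)
      = (∏ v, c v ^ a v) * coeff a p := by
  conv_lhs => rw [p.as_sum, map_sum]
  rw [coeff_sum]
  simp only [diag_monomial, coeff_C_mul, coeff_monomial]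
  rw [Finset.sum_eq_single a]
  · simp
  · intro b _ hb; simp [hb]
  · intro ha; simp [MvPolynomial.notMem_support_iff.mp ha]

omit [Fintype σ] in
lemma diag_comp (c d : σ → ℂ) (p : MvPolynomial σ ℂ) :
    aeval (fun v => (C (c v) * X v : MvPolynomial σ ℂ))
        (aeval (fun v => (C (d v) * X v : MvPolynomial σ ℂ)) p)
      = aeval (fun v => (C (c v * d v) * X v : MvPolynomial σ ℂ)) p := by
  have h : ((aeval (fun v => (C (c v) * X v : MvPolynomial σ ℂ))).comp
      (aeval (fun v => (C (d v) * X v : MvPolynomial σ ℂ))))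
      = aeval (fun v => (C (c v * d v) * X v : MvPolynomial σ ℂ)) := by
    apply algHom_ext
    intro v
    simp [map_mul, mul_assoc, mul_left_comm]
  exact AlgHom.congr_fun h p

omit [Fintype σ] in
lemma diag_one (p : MvPolynomial σ ℂ) :
    aeval (fun v => (C (1:ℂ) * X v : MvPolynomial σ ℂ)) p = p := by
  simp only [C_1, one_mul]
  rw [aeval_X_left]
  rfl

end Diag

set_option maxHeartbeats 1000000 in
/-- the subalgebra of elements of `R` fixed by the `ℂ`-algebra automorphisms
`σ₁, …, σ_{n-1}` (where `σₖ` multiplies `xₖ` and `xₙ` by a primitive cube root of unity `ζ`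
and fixes the other variables) equals the `ℂ`-subalgebra generated by
`y₁, …, yₙ`, `x₁x₂⋯x_{n-1}xₙ²` and `x₁²x₂²⋯x_{n-1}²xₙ`. -/
theorem stmt_8 (n : ℕ) (hn : 2 ≤ n) (ζ : ℂ) (hζ : IsPrimitiveRoot ζ 3)
    (σ : Fin (n - 1) → (cubicRing n ≃ₐ[ℂ] cubicRing n))
    (hσxk : ∀ k : Fin (n - 1),
      σ k (xc n (Fin.castLE (Nat.sub_le n 1) k)) =
        algebraMap ℂ (cubicRing n) ζ * xc n (Fin.castLE (Nat.sub_le n 1) k))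
    (hσxn : ∀ k : Fin (n - 1),
      σ k (xc n ⟨n - 1, by omega⟩) = algebraMap ℂ (cubicRing n) ζ * xc n ⟨n - 1, by omega⟩)
    (hσxi : ∀ (k : Fin (n - 1)) (i : Fin n),
      i ≠ Fin.castLE (Nat.sub_le n 1) k → i ≠ ⟨n - 1, by omega⟩ → σ k (xc n i) = xc n i)
    (hσy : ∀ (k : Fin (n - 1)) (i : Fin n), σ k (yc n i) = yc n i) :
    {r : cubicRing n | ∀ k, σ k r = r} =
      ↑(Algebra.adjoin ℂ (Set.range (yc n) ∪
        {(∏ i ∈ Finset.univ.erase (⟨n - 1, by omega⟩ : Fin n), xc n i) *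
            xc n ⟨n - 1, by omega⟩ ^ 2,
         (∏ i ∈ Finset.univ.erase (⟨n - 1, by omega⟩ : Fin n), xc n i ^ 2) *
            xc n ⟨n - 1, by omega⟩})) := by
  -- notation
  set I : Ideal (MvPolynomial (Fin n ⊕ Fin n) ℂ) :=
    Ideal.span (Set.range fun i : Fin n =>
      (X (Sum.inr i) : MvPolynomial (Fin n ⊕ Fin n) ℂ) ^ 2 + X (Sum.inr i) - X (Sum.inl i) ^ 3)
    with hI
  set N : Fin n := ⟨n - 1, by omega⟩ with hN
  set K : Fin (n - 1) → Fin n := Fin.castLE (Nat.sub_le n 1) with hK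
  set z : cubicRing n := algebraMap ℂ (cubicRing n) ζ with hz
  set P : cubicRing n := (∏ i ∈ Finset.univ.erase N, xc n i) * xc n N ^ 2 with hP
  set Q : cubicRing n := (∏ i ∈ Finset.univ.erase N, xc n i ^ 2) * xc n N with hQ
  set A : Subalgebra ℂ (cubicRing n) :=
    Algebra.adjoin ℂ (Set.range (yc n) ∪ {P, Q}) with hA
  have hKN : ∀ k : Fin (n-1), K k ≠ N := by
    intro k
    exact Fin.ne_of_val_ne (by simpa [hK, hN] using (Nat.ne_of_lt k.isLt))
  have hz3 : z ^ 3 = 1 := by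
    rw [hz, ← map_pow, hζ.pow_eq_one, map_one]
  have hPmem : P ∈ A := Algebra.subset_adjoin (Or.inr (Set.mem_insert _ _))
  have hQmem : Q ∈ A := Algebra.subset_adjoin (Or.inr (Set.mem_insert_of_mem _ rfl))
  have hymem : ∀ i, yc n i ∈ A := fun i => Algebra.subset_adjoin (Or.inl ⟨i, rfl⟩)
  -- the cubic relation
  have hrel : ∀ i : Fin n, xc n i ^ 3 = yc n i ^ 2 + yc n i := by
    intro i
    rw [xc, yc, ← map_pow, ← map_pow, ← map_add]
    rw [Ideal.Quotient.eq]
    have : (X (Sum.inr i) : MvPolynomial (Fin n ⊕ Fin n) ℂ) ^ 2 + X (Sum.inr i)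
        - X (Sum.inl i) ^ 3 ∈ I := Ideal.subset_span ⟨i, rfl⟩
    have h2 := I.neg_mem this
    convert h2 using 1
    ring
  have hx3m : ∀ (i : Fin n) (m : ℕ), xc n i ^ (3 * m) ∈ A := by
    intro i m
    rw [pow_mul, hrel]
    exact pow_mem (add_mem (pow_mem (hymem i) 2) (hymem i)) m
  -- action on generators
  have hσx : ∀ (k : Fin (n-1)) (i : Fin n), i ≠ N →
      σ k (xc n i) = (if i = K k then z else 1) * xc n i := by
    intro k i hiN
    by_cases h : i = K k
    · subst h; rw [if_pos rfl]; exact hσxk k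
    · rw [if_neg h, one_mul]; exact hσxi k i h hiN
  have hKmem : ∀ k : Fin (n-1), K k ∈ Finset.univ.erase N :=
    fun k => Finset.mem_erase.mpr ⟨hKN k, Finset.mem_univ _⟩
  have hσprod1 : ∀ k, σ k (∏ i ∈ Finset.univ.erase N, xc n i)
      = z * ∏ i ∈ Finset.univ.erase N, xc n i := by
    intro k
    rw [map_prod]
    calc ∏ i ∈ Finset.univ.erase N, σ k (xc n i)
        = ∏ i ∈ Finset.univ.erase N, (if i = K k then z else 1) * xc n i :=
          Finset.prod_congr rfl (fun i hi => hσx k i (Finset.mem_erase.mp hi).1)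
      _ = (∏ i ∈ Finset.univ.erase N, if i = K k then z else 1)
            * ∏ i ∈ Finset.univ.erase N, xc n i := Finset.prod_mul_distrib
      _ = z * ∏ i ∈ Finset.univ.erase N, xc n i := by
          rw [Finset.prod_ite_eq' (Finset.univ.erase N) (K k) (fun _ => z), if_pos (hKmem k)]
  have hσprod2 : ∀ k, σ k (∏ i ∈ Finset.univ.erase N, xc n i ^ 2)
      = z ^ 2 * ∏ i ∈ Finset.univ.erase N, xc n i ^ 2 := by
    intro k
    rw [map_prod]
    calc ∏ i ∈ Finset.univ.erase N, σ k (xc n i ^ 2)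
        = ∏ i ∈ Finset.univ.erase N, (if i = K k then z ^ 2 else 1) * xc n i ^ 2 := by
          refine Finset.prod_congr rfl (fun i hi => ?_)
          rw [map_pow, hσx k i (Finset.mem_erase.mp hi).1, mul_pow]
          congr 1
          simp [apply_ite (· ^ 2)]
      _ = (∏ i ∈ Finset.univ.erase N, if i = K k then z ^ 2 else 1)
            * ∏ i ∈ Finset.univ.erase N, xc n i ^ 2 := Finset.prod_mul_distrib
      _ = z ^ 2 * ∏ i ∈ Finset.univ.erase N, xc n i ^ 2 := by
          rw [Finset.prod_ite_eq' (Finset.univ.erase N) (K k) (fun _ => z ^ 2),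
            if_pos (hKmem k)]
  have hσP : ∀ k, σ k P = P := by
    intro k
    rw [hP, map_mul, map_pow, hσprod1, hσxn k]
    have : z * (∏ i ∈ Finset.univ.erase N, xc n i) * (z * xc n N) ^ 2
        = z ^ 3 * ((∏ i ∈ Finset.univ.erase N, xc n i) * xc n N ^ 2) := by ring
    rw [this, hz3, one_mul]
  have hσQ : ∀ k, σ k Q = Q := by
    intro k
    rw [hQ, map_mul, hσprod2, hσxn k]
    have : z ^ 2 * (∏ i ∈ Finset.univ.erase N, xc n i ^ 2) * (z * xc n N)
        = z ^ 3 * ((∏ i ∈ Finset.univ.erase N, xc n i ^ 2) * xc n N) := by ring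
    rw [this, hz3, one_mul]
  have heasy : ∀ r ∈ A, ∀ k, σ k r = r := by
    intro r hr k
    induction hr using Algebra.adjoin_induction with
    | mem x hx =>
      rcases hx with ⟨i, rfl⟩ | hx
      · exact hσy k i
      · rcases hx with rfl | rfl
        · exact hσP k
        · exact hσQ k
    | algebraMap c => exact (σ k).commutes c
    | add x y _ _ hx hy => rw [map_add, hx, hy]
    | mul x y _ _ hx hy => rw [map_mul, hx, hy]
  -- lift of sigma to the polynomial ring
  have hmkC : ∀ a : ℂ, Ideal.Quotient.mk I (C a) = algebraMap ℂ (cubicRing n) a := by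
    intro a
    rfl
  set c : Fin (n-1) → (Fin n ⊕ Fin n) → ℂ :=
    fun k v => if v = Sum.inl (K k) ∨ v = Sum.inl N then ζ else 1 with hc
  set t : Fin (n-1) → (MvPolynomial (Fin n ⊕ Fin n) ℂ →ₐ[ℂ] MvPolynomial (Fin n ⊕ Fin n) ℂ) :=
    fun k => aeval (fun v => C (c k v) * X v) with ht
  have hcinr : ∀ k i, c k (Sum.inr i) = 1 := by
    intro k i; rw [hc]; simp
  have hmt : ∀ (k : Fin (n-1)) (p : MvPolynomial (Fin n ⊕ Fin n) ℂ),
      Ideal.Quotient.mk I (t k p) = σ k (Ideal.Quotient.mk I p) := by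
    intro k p
    have h : (Ideal.Quotient.mkₐ ℂ I).comp (t k)
        = ((σ k : cubicRing n →ₐ[ℂ] cubicRing n)).comp (Ideal.Quotient.mkₐ ℂ I) := by
      apply algHom_ext
      intro v
      simp only [AlgHom.comp_apply, ht, aeval_X, Ideal.Quotient.mkₐ_eq_mk, map_mul, hmkC]
      simp only [hc]
      cases v with
      | inl i =>
        by_cases h1 : i = K k
        · subst h1
          rw [if_pos (Or.inl rfl)]
          exact (hσxk k).symm
        · by_cases h2 : i = N
          · subst h2
            rw [if_pos (Or.inr rfl)]
            exact (hσxn k).symm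
          · rw [if_neg (by simp [h1, h2]), map_one, one_mul]
            exact (hσxi k i h1 h2).symm
      | inr i =>
        rw [if_neg (by simp), map_one, one_mul]
        exact (hσy k i).symm
    have := AlgHom.congr_fun h p
    simpa [Ideal.Quotient.mkₐ_eq_mk] using this
  -- weight of a monomial
  have hweight : ∀ (k : Fin (n-1)) (a : (Fin n ⊕ Fin n) →₀ ℕ),
      (∏ v, c k v ^ a v) = ζ ^ (a (Sum.inl (K k)) + a (Sum.inl N)) := by
    intro k a
    have hne : (Sum.inl (K k) : Fin n ⊕ Fin n) ≠ Sum.inl N := by simp [hKN k]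
    rw [← Finset.prod_subset
      (Finset.subset_univ ({Sum.inl (K k), Sum.inl N} : Finset (Fin n ⊕ Fin n)))
      (fun v _ hv => ?_)]
    · rw [Finset.prod_pair hne]
      have h1 : c k (Sum.inl (K k)) = ζ := by simp [hc]
      have h2 : c k (Sum.inl N) = ζ := by simp [hc]
      rw [h1, h2, pow_add]
    · simp only [Finset.mem_insert, Finset.mem_singleton, not_or] at hv
      have : c k v = 1 := by simp only [hc]; rw [if_neg (by tauto)]
      rw [this, one_pow]
  -- t k is an involution of order 3, and the t's commute
  have hcube : ∀ (k : Fin (n-1)) (q : MvPolynomial (Fin n ⊕ Fin n) ℂ),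
      t k (t k (t k q)) = q := by
    intro k q
    simp only [ht]
    rw [diag_comp, diag_comp]
    have hfun : (fun v => (C (c k v * c k v * c k v) * X v : MvPolynomial (Fin n ⊕ Fin n) ℂ))
        = fun v => C (1:ℂ) * X v := by
      funext v
      have : c k v * c k v * c k v = 1 := by
        simp only [hc]
        split
        · calc ζ * ζ * ζ = ζ ^ 3 := by ring
            _ = 1 := hζ.pow_eq_one
        · ring
      rw [this]
    rw [hfun, diag_one]
  have hcomm : ∀ (j k : Fin (n-1)) (q : MvPolynomial (Fin n ⊕ Fin n) ℂ),
      t j (t k q) = t k (t j q) := by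
    intro j k q
    simp only [ht]
    rw [diag_comp, diag_comp]
    have : (fun v => (C (c j v * c k v) * X v : MvPolynomial (Fin n ⊕ Fin n) ℂ))
        = fun v => C (c k v * c j v) * X v := by
      funext v
      rw [mul_comm (c j v) (c k v)]
    rw [this]
  have htC : ∀ (k : Fin (n-1)) (a : ℂ), t k (C a) = C a := by
    intro k a
    simp only [ht]
    rw [← algebraMap_eq]
    exact (aeval _).commutes a
  -- the averaging operator
  set avg : Fin (n-1) → MvPolynomial (Fin n ⊕ Fin n) ℂ → MvPolynomial (Fin n ⊕ Fin n) ℂ :=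
    fun k q => C ((3:ℂ)⁻¹) * (q + t k q + t k (t k q)) with havg
  have havg_mk : ∀ (k : Fin (n-1)) (q : MvPolynomial (Fin n ⊕ Fin n) ℂ),
      (∀ j, σ j (Ideal.Quotient.mk I q) = Ideal.Quotient.mk I q) →
      Ideal.Quotient.mk I (avg k q) = Ideal.Quotient.mk I q := by
    intro k q hq
    simp only [havg]
    rw [map_mul, map_add, map_add, hmkC]
    simp only [hmt, hq]
    have h33 : (Ideal.Quotient.mk I q + Ideal.Quotient.mk I q + Ideal.Quotient.mk I q)
        = algebraMap ℂ (cubicRing n) 3 * Ideal.Quotient.mk I q := by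
      rw [show (3:ℂ) = 1 + 1 + 1 by norm_num, map_add, map_add, map_one]
      ring
    rw [h33, ← mul_assoc, ← map_mul]
    norm_num
  have havg_fix : ∀ (k : Fin (n-1)) (q : MvPolynomial (Fin n ⊕ Fin n) ℂ),
      t k (avg k q) = avg k q := by
    intro k q
    simp only [havg]
    rw [map_mul, htC, map_add, map_add, hcube]
    ring
  have havg_comm : ∀ (j k : Fin (n-1)) (q : MvPolynomial (Fin n ⊕ Fin n) ℂ),
      t j (avg k q) = avg k (t j q) := by
    intro j k q
    simp only [havg]
    rw [map_mul, htC, map_add, map_add, hcomm j k, hcomm j k, hcomm j k q]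
  -- averaging along a list of indices
  have hmain : ∀ (L : List (Fin (n-1))) (q : MvPolynomial (Fin n ⊕ Fin n) ℂ),
      (∀ j, σ j (Ideal.Quotient.mk I q) = Ideal.Quotient.mk I q) →
      ∃ q', Ideal.Quotient.mk I q' = Ideal.Quotient.mk I q ∧ ∀ k ∈ L, t k q' = q' := by
    intro L
    induction L with
    | nil => exact fun q _ => ⟨q, rfl, by simp⟩
    | cons a L ih =>
      intro q hq
      obtain ⟨q', hq', hL⟩ := ih q hq
      have hq'fix : ∀ j, σ j (Ideal.Quotient.mk I q') = Ideal.Quotient.mk I q' := by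
        intro j; rw [hq', hq j]
      refine ⟨avg a q', ?_, ?_⟩
      · rw [havg_mk a q' hq'fix, hq']
      · intro k hk
        rcases List.mem_cons.mp hk with rfl | hk
        · exact havg_fix k q'
        · rw [havg_comm, hL k hk]
  -- membership of pure x-monomials with the congruence condition
  have hxpart : ∀ α : Fin n → ℕ, (∀ i, i ≠ N → 3 ∣ α i + α N) →
      (∏ i, xc n i ^ α i) ∈ A := by
    intro α hα
    have hc3 : α N % 3 = 0 ∨ α N % 3 = 1 ∨ α N % 3 = 2 := by omega
    rw [← Finset.prod_erase_mul Finset.univ _ (Finset.mem_univ N)]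
    rcases hc3 with h0 | h1 | h2
    · -- all exponents divisible by 3
      have hall : ∀ i, 3 ∣ α i := by
        intro i
        by_cases hi : i = N
        · subst hi; omega
        · have := hα i hi; omega
      refine mul_mem (prod_mem fun i _ => ?_) ?_
      · obtain ⟨m, hm⟩ := hall i
        rw [hm]; exact hx3m i m
      · obtain ⟨m, hm⟩ := hall N
        rw [hm]; exact hx3m N m
    · -- α N ≡ 1, use Q
      have h2' : ∀ i, i ≠ N → α i % 3 = 2 := by
        intro i hi; have := hα i hi; omega
      have hsplit : (∏ i ∈ Finset.univ.erase N, xc n i ^ α i)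
          = (∏ i ∈ Finset.univ.erase N, xc n i ^ (α i - 2))
            * (∏ i ∈ Finset.univ.erase N, xc n i ^ 2) := by
        rw [← Finset.prod_mul_distrib]
        refine Finset.prod_congr rfl fun i hi => ?_
        rw [← pow_add]
        congr 1
        have := h2' i (Finset.mem_erase.mp hi).1
        omega
      have hsplitN : xc n N ^ α N = xc n N ^ (α N - 1) * xc n N := by
        rw [← pow_succ]
        congr 1
        omega
      rw [hsplit, hsplitN]
      have hre : (∏ i ∈ Finset.univ.erase N, xc n i ^ (α i - 2))
            * (∏ i ∈ Finset.univ.erase N, xc n i ^ 2)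
            * (xc n N ^ (α N - 1) * xc n N)
          = ((∏ i ∈ Finset.univ.erase N, xc n i ^ (α i - 2)) * xc n N ^ (α N - 1)) * Q := by
        rw [hQ]; ring
      rw [hre]
      refine mul_mem (mul_mem (prod_mem fun i hi => ?_) ?_) hQmem
      · have hdi := h2' i (Finset.mem_erase.mp hi).1
        have : 3 ∣ α i - 2 := by omega
        obtain ⟨m, hm⟩ := this
        rw [hm]; exact hx3m i m
      · have : 3 ∣ α N - 1 := by omega
        obtain ⟨m, hm⟩ := this
        rw [hm]; exact hx3m N m
    · -- α N ≡ 2, use P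
      have h1' : ∀ i, i ≠ N → α i % 3 = 1 := by
        intro i hi; have := hα i hi; omega
      have hsplit : (∏ i ∈ Finset.univ.erase N, xc n i ^ α i)
          = (∏ i ∈ Finset.univ.erase N, xc n i ^ (α i - 1))
            * (∏ i ∈ Finset.univ.erase N, xc n i) := by
        rw [← Finset.prod_mul_distrib]
        refine Finset.prod_congr rfl fun i hi => ?_
        rw [← pow_succ]
        congr 1
        have := h1' i (Finset.mem_erase.mp hi).1
        omega
      have hsplitN : xc n N ^ α N = xc n N ^ (α N - 2) * xc n N ^ 2 := by
        rw [← pow_add]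
        congr 1
        omega
      rw [hsplit, hsplitN]
      have hre : (∏ i ∈ Finset.univ.erase N, xc n i ^ (α i - 1))
            * (∏ i ∈ Finset.univ.erase N, xc n i)
            * (xc n N ^ (α N - 2) * xc n N ^ 2)
          = ((∏ i ∈ Finset.univ.erase N, xc n i ^ (α i - 1)) * xc n N ^ (α N - 2)) * P := by
        rw [hP]; ring
      rw [hre]
      refine mul_mem (mul_mem (prod_mem fun i hi => ?_) ?_) hPmem
      · have hdi := h1' i (Finset.mem_erase.mp hi).1
        have : 3 ∣ α i - 1 := by omega
        obtain ⟨m, hm⟩ := this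
        rw [hm]; exact hx3m i m
      · have : 3 ∣ α N - 2 := by omega
        obtain ⟨m, hm⟩ := this
        rw [hm]; exact hx3m N m
  -- membership of a single good monomial
  have hmono : ∀ (a : (Fin n ⊕ Fin n) →₀ ℕ) (b : ℂ),
      (∀ k : Fin (n-1), 3 ∣ a (Sum.inl (K k)) + a (Sum.inl N)) →
      Ideal.Quotient.mk I (monomial a b) ∈ A := by
    intro a b hdvd
    have hmk : Ideal.Quotient.mk I (monomial a b)
        = algebraMap ℂ (cubicRing n) b
          * ((∏ i, xc n i ^ a (Sum.inl i)) * ∏ i, yc n i ^ a (Sum.inr i)) := by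
      rw [monomial_eq, Finsupp.prod_pow, map_mul, hmkC, map_prod]
      congr 1
      calc ∏ v : Fin n ⊕ Fin n, Ideal.Quotient.mk I (X v ^ a v)
          = ∏ v : Fin n ⊕ Fin n, (Ideal.Quotient.mk I (X v)) ^ a v := by
            simp [map_pow]
        _ = (∏ i, xc n i ^ a (Sum.inl i)) * ∏ i, yc n i ^ a (Sum.inr i) :=
            Fintype.prod_sum_type _
    rw [hmk]
    have hdvd' : ∀ i, i ≠ N → 3 ∣ a (Sum.inl i) + a (Sum.inl N) := by
      intro i hi
      have hne : (i : ℕ) ≠ n - 1 := fun h => hi (Fin.ext h)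
      have hlt : (i : ℕ) < n - 1 := by have := i.isLt; omega
      have hKi : K ⟨(i : ℕ), hlt⟩ = i := Fin.ext rfl
      have := hdvd ⟨(i : ℕ), hlt⟩
      rwa [hKi] at this
    exact mul_mem (A.algebraMap_mem b)
      (mul_mem (hxpart _ hdvd') (prod_mem fun i _ => pow_mem (hymem i) _))
  -- finish
  ext r
  simp only [Set.mem_setOf_eq, SetLike.mem_coe]
  constructor
  · intro hr
    obtain ⟨p, rfl⟩ := Ideal.Quotient.mk_surjective r
    obtain ⟨q, hq, hinv⟩ := hmain (List.finRange (n-1)) p hr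
    rw [← hq]
    have hinv' : ∀ k, t k q = q := fun k => hinv k (List.mem_finRange k)
    have hsup : ∀ a ∈ q.support, ∀ k : Fin (n-1),
        3 ∣ a (Sum.inl (K k)) + a (Sum.inl N) := by
      intro a ha k
      have h1 : coeff a (t k q) = (∏ v, c k v ^ a v) * coeff a q := by
        simp only [ht]
        exact diag_coeff _ _ _
      rw [hinv' k] at h1
      have hne : coeff a q ≠ 0 := MvPolynomial.mem_support_iff.mp ha
      have hW : (∏ v, c k v ^ a v) = 1 :=
        mul_right_cancel₀ hne (by rw [← h1, one_mul])
      rw [hweight k a] at hW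
      exact (hζ.pow_eq_one_iff_dvd _).mp hW
    rw [q.as_sum, map_sum]
    exact sum_mem fun a ha => hmono a _ (hsup a ha)
  · intro hr k
    exact heasy r hr k
end
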